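/- For every k ∈ ℕ, the graph J_k (the enhanced long-jump grid) is (f, k)-tightly connected with f(q) = (2q+1)²: for every separation (B₁, B₂) of J_k of order q < k such that both J_k[B₁ \ B₂] and J_k[B₂ \ B₁] are connected, at least one of B₁, B₂ has at most (2q+1)² vertices. -/

import Mathlib

/-- The vertex set of the enhanced long-jump grid `J_k`: the `((4k+4) × (2k+1))`-annulus
grid (with `k' = 2k+1`, this is the `((2k'+2) × k')`-cylindrical grid) together with
`k+1` satellite vertices. -/
def JkVertex (k : ℕ) : Type := (Fin (4 * k + 4) × Fin (2 * k + 1)) ⊕ Fin (k + 1)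

/-- The enhanced long-jump grid `J_k`: the cylindrical annulus grid (first coordinate
cyclic, second radial, `0` innermost), together with jump edges along the innermost
cycle, and `k+1` satellite vertices, each adjacent to four consecutive vertices of the
outermost cycle. -/
def Jk (k : ℕ) : SimpleGraph (JkVertex k) :=
  SimpleGraph.fromRel (fun x y =>
    match x, y with
    | Sum.inl (i, j), Sum.inl (i', j') =>
        -- radial edges
        (i = i' ∧ (j' : ℕ) = (j : ℕ) + 1) ∨
        -- cycle edges
        (j = j' ∧ (i' : ℕ) = ((i : ℕ) + 1) % (4 * k + 4)) ∨
        -- jump edges along the innermost cycle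
        ((j : ℕ) = 0 ∧ (j' : ℕ) = 0 ∧
          ∃ m ≤ k, (i : ℕ) = (2 * m) % (4 * k + 4) ∧ (i' : ℕ) = (2 * m + 2) % (4 * k + 4))
    | Sum.inl (i, j), Sum.inr s =>
        -- satellite edges: satellite `s` is adjacent to four consecutive outermost vertices
        (j : ℕ) = 2 * k ∧ ∃ r < 4, (i : ℕ) = (4 * (s : ℕ) + r) % (4 * k + 4)
    | _, _ => False)

instance (k : ℕ) : Fintype (JkVertex k) := by unfold JkVertex; infer_instance
instance (k : ℕ) : Finite (JkVertex k) := Finite.of_fintype _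

namespace JkAux

variable {k : ℕ}

/-- Columns (first coordinates) hit by the separator. -/
def hitI (S : Set (JkVertex k)) : Set (Fin (4 * k + 4)) :=
  {i | ∃ j, Sum.inl (i, j) ∈ S}

/-- Rows (second coordinates) hit by the separator. -/
def hitJ (S : Set (JkVertex k)) : Set (Fin (2 * k + 1)) :=
  {j | ∃ i, Sum.inl (i, j) ∈ S}

lemma ncard_hitI (S : Set (JkVertex k)) : (hitI S).ncard ≤ S.ncard := by
  have hsub : hitI S ⊆ (fun x : JkVertex k => match x with
      | Sum.inl (i, _) => i
      | Sum.inr _ => (⟨0, by omega⟩ : Fin (4*k+4))) '' S := by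
    rintro i ⟨j, hj⟩
    exact ⟨Sum.inl (i, j), hj, rfl⟩
  exact le_trans (Set.ncard_le_ncard hsub (S.toFinite.image _)) (Set.ncard_image_le S.toFinite)

lemma ncard_hitJ (S : Set (JkVertex k)) : (hitJ S).ncard ≤ S.ncard := by
  have hsub : hitJ S ⊆ (fun x : JkVertex k => match x with
      | Sum.inl (_, j) => j
      | Sum.inr _ => (⟨0, by omega⟩ : Fin (2*k+1))) '' S := by
    rintro j ⟨i, hi⟩
    exact ⟨Sum.inl (i, j), hi, rfl⟩
  exact le_trans (Set.ncard_le_ncard hsub (S.toFinite.image _)) (Set.ncard_image_le S.toFinite)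

lemma adj_radial (i : Fin (4*k+4)) (a b : Fin (2*k+1)) (h : (b:ℕ) = (a:ℕ) + 1) :
    (Jk k).Adj (Sum.inl (i,a)) (Sum.inl (i,b)) := by
  refine (SimpleGraph.fromRel_adj (V := JkVertex k) _ _ _).mpr ?_
  refine ⟨?_, Or.inl (Or.inl ⟨rfl, h⟩)⟩
  intro he
  injection he with he'
  have hab : a = b := congrArg Prod.snd he'
  rw [← hab] at h
  omega

lemma adj_cyc (i i' : Fin (4*k+4)) (j : Fin (2*k+1)) (h : (i':ℕ) = ((i:ℕ) + 1) % (4*k+4)) :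
    (Jk k).Adj (Sum.inl (i,j)) (Sum.inl (i',j)) := by
  refine (SimpleGraph.fromRel_adj (V := JkVertex k) _ _ _).mpr ?_
  refine ⟨?_, Or.inl (Or.inr (Or.inl ⟨rfl, h⟩))⟩
  intro hii
  injection hii with hii'
  have hab : i = i' := congrArg Prod.fst hii'
  rw [← hab] at h
  have h2 : (i : ℕ) < 4*k+4 := i.isLt
  rcases Nat.lt_or_ge ((i:ℕ)+1) (4*k+4) with hlt | hge
  · rw [Nat.mod_eq_of_lt hlt] at h; omega
  · have h3 : (i:ℕ) = 4*k+3 := by omega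
    rw [h3] at h
    have h4 : (4*k+3+1) % (4*k+4) = 0 := by
      have h5 : 4*k+3+1 = 4*k+4 := by omega
      rw [h5, Nat.mod_self]
    omega

lemma adj_sat (s : Fin (k+1)) :
    (Jk k).Adj (Sum.inl ((⟨4*(s:ℕ), by omega⟩ : Fin (4*k+4)), (⟨2*k, by omega⟩ : Fin (2*k+1)))) (Sum.inr s) := by
  refine (SimpleGraph.fromRel_adj (V := JkVertex k) _ _ _).mpr ?_
  refine ⟨Sum.inl_ne_inr, Or.inl ⟨rfl, 0, by omega, ?_⟩⟩
  have hs : (s:ℕ) ≤ k := by omega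
  show 4*(s:ℕ) = (4*(s:ℕ) + 0) % (4*k+4)
  rw [Nat.mod_eq_of_lt (by omega)]
  omega


/-- Key counting lemma: if every vertex in an unhit row or column lies in `B₁ \ B₂`,
then `B₂` is small. -/
lemma aux (k q : ℕ) (B₁ B₂ : Set (JkVertex k))
    (hsep : ∀ u ∈ B₁ \ B₂, ∀ v ∈ B₂ \ B₁, ¬ (Jk k).Adj u v)
    (horder : (B₁ ∩ B₂).ncard = q)
    (hU : ∀ (i : Fin (4*k+4)) (j : Fin (2*k+1)),
        (i ∉ hitI (B₁ ∩ B₂) ∨ j ∉ hitJ (B₁ ∩ B₂)) → Sum.inl (i, j) ∈ B₁ \ B₂) :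
    B₂.ncard ≤ (2 * q + 1) ^ 2 := by
  set S := B₁ ∩ B₂ with hS
  set I := hitI S with hI
  set J := hitJ S with hJ
  have hIq : I.ncard ≤ q := horder ▸ ncard_hitI S
  have hJq : J.ncard ≤ q := horder ▸ ncard_hitJ S
  set Sat : Set (Fin (k+1)) := {s | Sum.inr s ∈ B₂ \ B₁} with hSat
  -- B₂ is covered by three sets
  have hsub : B₂ ⊆ S ∪ (Sum.inl '' (I ×ˢ J)) ∪ (Sum.inr '' Sat) := by
    intro x hx
    by_cases hx1 : x ∈ B₁
    · exact Or.inl (Or.inl ⟨hx1, hx⟩)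
    · match x with
      | Sum.inl (i, j) =>
        by_cases hij : i ∈ I ∧ j ∈ J
        · exact Or.inl (Or.inr ⟨(i, j), ⟨hij.1, hij.2⟩, rfl⟩)
        · exfalso
          have hcase : i ∉ I ∨ j ∉ J := by tauto
          exact hx1 (hU i j hcase).1
      | Sum.inr s => exact Or.inr ⟨s, ⟨hx, hx1⟩, rfl⟩
  -- satellites in B₂ \ B₁ inject into I
  have hSatq : Sat.ncard ≤ I.ncard := by
    apply Set.ncard_le_ncard_of_injOn
      (fun s : Fin (k+1) => (⟨4*(s:ℕ), by omega⟩ : Fin (4*k+4)))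
    · intro s hs
      by_contra hni
      have hv := hU ⟨4*(s:ℕ), by omega⟩ ⟨2*k, by omega⟩ (Or.inl hni)
      exact hsep _ hv _ hs (adj_sat s)
    · intro s _ t _ h
      have h2 : 4*(s:ℕ) = 4*(t:ℕ) := congrArg Fin.val h
      exact Fin.ext (by omega)
  have hSatq' : Sat.ncard ≤ q := le_trans hSatq hIq
  -- cardinality of the product part
  have hprod : (I ×ˢ J).ncard ≤ q * q := by
    have h1 : (I ×ˢ J).ncard = I.ncard * J.ncard := by
      rw [← Nat.card_coe_set_eq, ← Nat.card_coe_set_eq, ← Nat.card_coe_set_eq]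
      rw [Nat.card_congr (Equiv.Set.prod I J), Nat.card_prod]
    rw [h1]
    exact Nat.mul_le_mul hIq hJq
  calc B₂.ncard ≤ (S ∪ (Sum.inl '' (I ×ˢ J)) ∪ (Sum.inr '' Sat)).ncard :=
        Set.ncard_le_ncard hsub (Set.toFinite _)
    _ ≤ (S ∪ (Sum.inl '' (I ×ˢ J))).ncard + (Sum.inr '' Sat).ncard := Set.ncard_union_le _ _
    _ ≤ S.ncard + (Sum.inl '' (I ×ˢ J)).ncard + (Sum.inr '' Sat).ncard := by
        have := Set.ncard_union_le S (Sum.inl '' (I ×ˢ J))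
        exact Nat.add_le_add_right this _
    _ ≤ q + q * q + q := by
        have h2 : ((Sum.inl '' (I ×ˢ J) : Set (JkVertex k))).ncard = (I ×ˢ J).ncard :=
          Set.ncard_image_of_injective _ (fun a b hab => by injection hab)
        have h3 : ((Sum.inr '' Sat : Set (JkVertex k))).ncard = Sat.ncard :=
          Set.ncard_image_of_injective _ (fun a b hab => by injection hab)
        rw [horder]
        exact Nat.add_le_add (Nat.add_le_add le_rfl (h2.le.trans hprod)) (h3.le.trans hSatq')
    _ ≤ (2 * q + 1) ^ 2 := by nlinarith

end JkAux

/-- `J_k` is `(f, k)`-tightly connected with `f(q) = (2q+1)²`: for every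
separation `(B₁, B₂)` of `J_k` of order `q < k` with both strict sides connected,
one of `B₁`, `B₂` has at most `(2q+1)²` vertices. -/
theorem Jk_tightly_connected (k : ℕ) (B₁ B₂ : Set (JkVertex k)) (q : ℕ)
    (hcover : B₁ ∪ B₂ = Set.univ)
    (hsep : ∀ u ∈ B₁ \ B₂, ∀ v ∈ B₂ \ B₁, ¬ (Jk k).Adj u v)
    (horder : (B₁ ∩ B₂).ncard = q) (hq : q < k)
    (hc₁ : ((Jk k).induce (B₁ \ B₂)).Connected)
    (hc₂ : ((Jk k).induce (B₂ \ B₁)).Connected) :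
    B₁.ncard ≤ (2 * q + 1) ^ 2 ∨ B₂.ncard ≤ (2 * q + 1) ^ 2 := by
  classical
  set S := B₁ ∩ B₂ with hSdef
  set I := JkAux.hitI S with hIdef
  set J := JkAux.hitJ S with hJdef
  have hIq : I.ncard ≤ q := horder ▸ JkAux.ncard_hitI S
  have hJq : J.ncard ≤ q := horder ▸ JkAux.ncard_hitJ S
  obtain ⟨i₀, hi₀⟩ : ∃ i : Fin (4*k+4), i ∉ I := by
    by_contra h
    push_neg at h
    have hu : I = Set.univ := Set.eq_univ_of_forall h
    rw [hu, Set.ncard_univ] at hIq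
    simp [Nat.card_eq_fintype_card] at hIq
    omega
  obtain ⟨j₀, hj₀⟩ : ∃ j : Fin (2*k+1), j ∉ J := by
    by_contra h
    push_neg at h
    have hu : J = Set.univ := Set.eq_univ_of_forall h
    rw [hu, Set.ncard_univ] at hJq
    simp [Nat.card_eq_fintype_card] at hJq
    omega
  have step : ∀ u v : JkVertex k, (Jk k).Adj u v → u ∉ S → v ∉ S → (u ∈ B₁ ↔ v ∈ B₁) := by
    intro u v huv hu hv
    have hcu : u ∈ B₁ ∪ B₂ := hcover ▸ Set.mem_univ u
    have hcv : v ∈ B₁ ∪ B₂ := hcover ▸ Set.mem_univ v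
    constructor
    · intro h1
      by_contra h2
      exact hsep u ⟨h1, fun hb2 => hu ⟨h1, hb2⟩⟩ v ⟨hcv.resolve_left h2, h2⟩ huv
    · intro h1
      by_contra h2
      exact hsep v ⟨h1, fun hb2 => hv ⟨h1, hb2⟩⟩ u ⟨hcu.resolve_left h2, h2⟩ huv.symm
  have notSI : ∀ (i : Fin (4*k+4)) (j : Fin (2*k+1)), i ∉ I → Sum.inl (i,j) ∉ S :=
    fun i j hi hS => hi ⟨j, hS⟩
  have notSJ : ∀ (i : Fin (4*k+4)) (j : Fin (2*k+1)), j ∉ J → Sum.inl (i,j) ∉ S :=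
    fun i j hj hS => hj ⟨i, hS⟩
  have track : ∀ (i : Fin (4*k+4)), i ∉ I → ∀ a b : Fin (2*k+1),
      (Sum.inl (i,a) ∈ B₁ ↔ Sum.inl (i,b) ∈ B₁) := by
    intro i hi
    have key : ∀ (m : ℕ) (hm : m < 2*k+1),
        (Sum.inl (i, (⟨0, by omega⟩ : Fin (2*k+1))) ∈ B₁ ↔
          Sum.inl (i, (⟨m, hm⟩ : Fin (2*k+1))) ∈ B₁) := by
      intro m
      induction m with
      | zero => intro hm; exact Iff.rfl
      | succ n ih =>
        intro hm
        have hn : n < 2*k+1 := by omega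
        refine (ih hn).trans ?_
        exact step _ _ (JkAux.adj_radial i ⟨n, hn⟩ ⟨n+1, hm⟩ rfl)
          (notSI i _ hi) (notSI i _ hi)
    intro a b
    exact (key a.1 a.2).symm.trans (key b.1 b.2)
  have cyc : ∀ (j : Fin (2*k+1)), j ∉ J → ∀ a b : Fin (4*k+4),
      (Sum.inl (a,j) ∈ B₁ ↔ Sum.inl (b,j) ∈ B₁) := by
    intro j hj
    have key : ∀ (n : ℕ) (a : Fin (4*k+4)),
        (Sum.inl (a,j) ∈ B₁ ↔
          Sum.inl ((⟨((a:ℕ)+n) % (4*k+4), Nat.mod_lt _ (by omega)⟩ : Fin (4*k+4)), j) ∈ B₁) := by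
      intro n
      induction n with
      | zero =>
        intro a
        have he : (⟨((a:ℕ)+0) % (4*k+4), Nat.mod_lt _ (by omega)⟩ : Fin (4*k+4)) = a := by
          apply Fin.ext
          show ((a:ℕ)+0) % (4*k+4) = (a:ℕ)
          rw [Nat.add_zero]
          exact Nat.mod_eq_of_lt a.isLt
        rw [he]
      | succ n ih =>
        intro a
        refine (ih a).trans ?_
        refine step _ _ (JkAux.adj_cyc _ _ j ?_) (notSJ _ j hj) (notSJ _ j hj)
        show ((a:ℕ)+(n+1)) % (4*k+4) = (((a:ℕ)+n) % (4*k+4) + 1) % (4*k+4)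
        rw [Nat.mod_add_mod]
        congr 1
    intro a b
    have h1 := key ((b:ℕ) + (4*k+4) - (a:ℕ)) a
    have he : (⟨((a:ℕ)+((b:ℕ)+(4*k+4)-(a:ℕ))) % (4*k+4), Nat.mod_lt _ (by omega)⟩ : Fin (4*k+4)) = b := by
      apply Fin.ext
      show ((a:ℕ)+((b:ℕ)+(4*k+4)-(a:ℕ))) % (4*k+4) = (b:ℕ)
      have ha : (a:ℕ) < 4*k+4 := a.isLt
      have hb : (b:ℕ) < 4*k+4 := b.isLt
      have hx : (a:ℕ)+((b:ℕ)+(4*k+4)-(a:ℕ)) = (b:ℕ) + (4*k+4) := by omega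
      rw [hx, Nat.add_mod_right, Nat.mod_eq_of_lt hb]
    rw [he] at h1
    exact h1
  have hUside : ∀ (i : Fin (4*k+4)) (j : Fin (2*k+1)), (i ∉ I ∨ j ∉ J) →
      (Sum.inl (i,j) ∈ B₁ ↔ Sum.inl (i₀,j₀) ∈ B₁) := by
    rintro i j (hi | hj)
    · exact (track i hi j j₀).trans (cyc j₀ hj₀ i i₀)
    · exact (cyc j hj i i₀).trans (track i₀ hi₀ j j₀)
  by_cases hbase : Sum.inl (i₀,j₀) ∈ B₁
  · right
    apply JkAux.aux k q B₁ B₂ hsep horder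
    intro i j hij
    have h1 : Sum.inl (i,j) ∈ B₁ := (hUside i j hij).mpr hbase
    refine ⟨h1, fun h2 => ?_⟩
    rcases hij with hi | hj
    · exact notSI i j hi ⟨h1, h2⟩
    · exact notSJ i j hj ⟨h1, h2⟩
  · left
    apply JkAux.aux k q B₂ B₁ (fun u hu v hv a => hsep v hv u hu a.symm)
      (by rw [Set.inter_comm]; exact horder)
    intro i j hij
    rw [Set.inter_comm] at hij
    have h1 : Sum.inl (i,j) ∉ B₁ := fun h => hbase ((hUside i j hij).mp h)
    have hcv : Sum.inl (i,j) ∈ B₁ ∪ B₂ := hcover ▸ Set.mem_univ _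
    exact ⟨hcv.resolve_left h1, h1⟩
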